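/- Let P be a cancellative, difference-ordered, division positive ordered semiring. Every finite unguarded subprobabilistic system, given by an n×n matrix (a_ij) over P and subdistributions θ₁,…,θₙ over a poset Y with a_{i1}+⋯+a_{in}+∑_y θ_i(y) ≤ 1, has a least solution (x₁,…,xₙ) in subdistributions over Y (ordered pointwise) to the system x_i = a_{i1}x₁ + ⋯ + a_{in}xₙ + θ_i for all i. -/

import Mathlib

set_option linter.unusedSectionVars false
set_option linter.unusedVariables false
set_option maxHeartbeats 1000000

noncomputable def mass {Y P : Type*} [AddCommMonoid P] (θ : Y →₀ P) : P :=
  ∑ y ∈ θ.support, θ y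

section Helpers
variable {P Y : Type*} [Semiring P] [PartialOrder P]

lemma mass_sum_subset (θ : Y →₀ P) {s : Finset Y} (h : θ.support ⊆ s) :
    ∑ y ∈ s, θ y = mass θ :=
  (Finset.sum_subset h (fun y _ hy => Finsupp.notMem_support_iff.mp hy)).symm

lemma mass_add (θ φ : Y →₀ P) : mass (θ + φ) = mass θ + mass φ := by
  classical
  set s := (θ + φ).support ∪ (θ.support ∪ φ.support) with hs
  rw [← mass_sum_subset (θ + φ) (s := s) (by simp [hs]),
      ← mass_sum_subset θ (s := s) (fun y hy => Finset.mem_union_right _ (Finset.mem_union_left _ hy)),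
      ← mass_sum_subset φ (s := s) (fun y hy => Finset.mem_union_right _ (Finset.mem_union_right _ hy)),
      ← Finset.sum_add_distrib]
  simp

lemma mass_smul (c : P) (θ : Y →₀ P) : mass (c • θ) = c * mass θ := by
  classical
  rw [← mass_sum_subset (c • θ) (Finsupp.support_smul), mass, Finset.mul_sum]
  simp

lemma mass_zero : mass (0 : Y →₀ P) = 0 := by simp [mass]

lemma mass_finsum {ι : Type*} (s : Finset ι) (f : ι → Y →₀ P) :
    mass (∑ i ∈ s, f i) = ∑ i ∈ s, mass (f i) := by
  classical
  induction s using Finset.cons_induction with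
  | empty => simp [mass_zero]
  | cons i s hi ih => rw [Finset.sum_cons, Finset.sum_cons, mass_add, ih]

variable (hbot : ∀ r : P, 0 ≤ r)
    (haddmono : ∀ r s t : P, s ≤ t → r + s ≤ r + t)
    (hmulmono : ∀ r s t u : P, r ≤ s → t ≤ u → r * t ≤ s * u)

include hbot haddmono in
lemma le_self_add' (a b : P) : a ≤ a + b := by
  have := haddmono a 0 b (hbot b); simpa using this

include haddmono in
lemma add_le_add' {a b c d : P} (h1 : a ≤ b) (h2 : c ≤ d) : a + c ≤ b + d := by
  calc a + c ≤ a + d := haddmono _ _ _ h2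
    _ = d + a := add_comm _ _
    _ ≤ d + b := haddmono _ _ _ h1
    _ = b + d := add_comm _ _

include haddmono in
lemma sum_le_sum' {ι : Type*} {s : Finset ι} {f g : ι → P}
    (h : ∀ i ∈ s, f i ≤ g i) : ∑ i ∈ s, f i ≤ ∑ i ∈ s, g i := by
  classical
  induction s using Finset.cons_induction with
  | empty => simp
  | cons i s hi ih =>
    simp only [Finset.sum_cons]
    exact add_le_add' haddmono (h i (by simp)) (ih fun j hj => h j (by simp [hj]))

include hbot haddmono in
lemma single_le_sum' {ι : Type*} {s : Finset ι} {f : ι → P} {i : ι} (hi : i ∈ s) :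
    f i ≤ ∑ j ∈ s, f j := by
  classical
  rw [← Finset.add_sum_erase s f hi]
  exact le_self_add' hbot haddmono _ _

include hbot in
lemma eq_zero_of_le_zero' {a : P} (h : a ≤ 0) : a = 0 := le_antisymm h (hbot a)

include hbot haddmono in
lemma mass_eq_zero' {θ : Y →₀ P} (h : mass θ ≤ 0) (y : Y) : θ y = 0 := by
  classical
  by_cases hy : y ∈ θ.support
  · exact eq_zero_of_le_zero' hbot ((single_le_sum' hbot haddmono hy).trans h)
  · exact Finsupp.notMem_support_iff.mp hy

end Helpers


section Key
variable {P Y : Type*} [Semiring P] [PartialOrder P]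
variable (hbot : ∀ r : P, 0 ≤ r)
    (haddmono : ∀ r s t : P, s ≤ t → r + s ≤ r + t)
    (hmulmono : ∀ r s t u : P, r ≤ s → t ≤ u → r * t ≤ s * u)
    (hcanc : ∀ r s t : P, r + s ≤ r + t → s ≤ t)
    (hdiff : ∀ r s : P, r ≤ s → ∃ t : P, r + t = s)
    (hdiv : ∀ r : P, 0 < r → ∃ s : P, r * s = 1 ∧ s * r = 1)

include hbot haddmono hmulmono hcanc hdiff hdiv in
lemma key : ∀ (n : ℕ) (a : Fin n → Fin n → P) (θ : Fin n → (Y →₀ P)),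
    (∀ i, (∑ j, a i j) + mass (θ i) ≤ 1) →
    ∃ x : Fin n → (Y →₀ P),
      (∀ i, x i = (∑ j, a i j • x j) + θ i) ∧
      (∀ i, mass (x i) ≤ 1) ∧
      (∀ x' : Fin n → (Y →₀ P),
        (∀ i y, ((∑ j, a i j • x' j) + θ i) y ≤ x' i y) →
        ∀ i y, x i y ≤ x' i y) := by
  intro n
  induction n with
  | zero =>
    intro a θ hsub
    exact ⟨fun _ => 0, fun i => i.elim0, fun i => i.elim0, fun _ _ i => i.elim0⟩
  | succ n IH =>
    intro a θ hsub
    set L : Fin (n + 1) := Fin.last n with hL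
    -- abbreviations
    set SA : P := ∑ j : Fin n, a L j.castSucc with hSA
    have hrowL : (∑ j : Fin n, a L j.castSucc) + a L L + mass (θ L) ≤ 1 := by
      have := hsub L
      rwa [Fin.sum_univ_castSucc] at this
    have hALL1 : a L L ≤ 1 := by
      refine le_trans ?_ hrowL
      calc a L L ≤ a L L + ((∑ j : Fin n, a L j.castSucc) + mass (θ L)) :=
            le_self_add' hbot haddmono _ _
        _ = (∑ j : Fin n, a L j.castSucc) + a L L + mass (θ L) := by abel
    obtain ⟨t, ht⟩ := hdiff (a L L) 1 hALL1
    have hXt : (∑ j : Fin n, a L j.castSucc) + mass (θ L) ≤ t := by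
      apply hcanc (a L L)
      rw [ht]
      calc a L L + ((∑ j : Fin n, a L j.castSucc) + mass (θ L))
          = (∑ j : Fin n, a L j.castSucc) + a L L + mass (θ L) := by abel
        _ ≤ 1 := hrowL
    by_cases h0 : t = 0
    · -- degenerate case: a L L = 1, row L vanishes otherwise
      subst h0
      rw [add_zero] at ht
      have hX0 : (∑ j : Fin n, a L j.castSucc) + mass (θ L) = 0 :=
        eq_zero_of_le_zero' hbot hXt
      have hsum0 : (∑ j : Fin n, a L j.castSucc) = 0 :=
        eq_zero_of_le_zero' hbot (by
          calc (∑ j : Fin n, a L j.castSucc)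
              ≤ (∑ j : Fin n, a L j.castSucc) + mass (θ L) := le_self_add' hbot haddmono _ _
            _ = 0 := hX0)
      have haLj : ∀ j : Fin n, a L j.castSucc = 0 := by
        intro j
        have h := single_le_sum' hbot haddmono (f := fun j : Fin n => a L j.castSucc)
          (Finset.mem_univ j)
        rw [hsum0] at h
        exact eq_zero_of_le_zero' hbot h
      have hθL : ∀ y, θ L y = 0 := by
        apply mass_eq_zero' hbot haddmono
        calc mass (θ L) ≤ (∑ j : Fin n, a L j.castSucc) + mass (θ L) := by
              rw [add_comm]; exact le_self_add' hbot haddmono _ _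
          _ = 0 := hX0
      -- reduced system
      set b : Fin n → Fin n → P := fun i j => a i.castSucc j.castSucc with hb
      set φ : Fin n → (Y →₀ P) := fun i => θ i.castSucc with hφ
      have hsub' : ∀ i, (∑ j, b i j) + mass (φ i) ≤ 1 := by
        intro i
        have h := hsub i.castSucc
        rw [Fin.sum_univ_castSucc] at h
        refine le_trans ?_ h
        exact add_le_add' haddmono (le_self_add' hbot haddmono _ _) (le_refl _)
      obtain ⟨z, hz_eq, hz_mass, hz_least⟩ := IH b φ hsub'
      refine ⟨Fin.snoc z 0, ?_, ?_, ?_⟩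
      · intro i
        refine Fin.lastCases ?_ ?_ i
        · rw [Fin.snoc_last, Fin.sum_univ_castSucc, Fin.snoc_last, smul_zero, add_zero]
          ext y
          simp only [Finsupp.add_apply, Finsupp.coe_zero, Pi.zero_apply,
            Finsupp.finset_sum_apply, Finsupp.smul_apply, hθL]
          rw [Finset.sum_eq_zero, zero_add]
          · exact (hθL y).symm
          intro j _
          rw [haLj j, zero_smul]
        · intro i
          rw [Fin.snoc_castSucc, Fin.sum_univ_castSucc, Fin.snoc_last, smul_zero, add_zero]
          simp only [Fin.snoc_castSucc]
          exact hz_eq i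
      · intro i
        refine Fin.lastCases ?_ ?_ i
        · rw [Fin.snoc_last, mass_zero]; exact hbot 1 |>.trans (le_refl 1) |>.trans (le_refl 1)
        · intro i; rw [Fin.snoc_castSucc]; exact hz_mass i
      · intro x' hsup i
        have hz' : ∀ i y, ((∑ j, b i j • (fun k => x' k.castSucc) j) + φ i) y
            ≤ x' i.castSucc y := by
          intro i y
          refine le_trans ?_ (hsup i.castSucc y)
          simp only [Finsupp.add_apply, Finsupp.finset_sum_apply, Finsupp.smul_apply,
            smul_eq_mul, Fin.sum_univ_castSucc]
          calc (∑ j : Fin n, b i j * x' j.castSucc y) + φ i y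
              ≤ ((∑ j : Fin n, b i j * x' j.castSucc y) + φ i y)
                  + a i.castSucc L * x' L y := le_self_add' hbot haddmono _ _
            _ = (∑ j : Fin n, a i.castSucc j.castSucc * x' j.castSucc y)
                  + a i.castSucc L * x' L y + θ i.castSucc y := by rw [hb, hφ]; abel
        refine Fin.lastCases ?_ ?_ i
        · intro y; rw [Fin.snoc_last]; exact hbot _
        · intro i y; rw [Fin.snoc_castSucc]; exact hz_least _ hz' i y
    · -- main case: t > 0
      have ht0 : 0 < t := lt_of_le_of_ne (hbot t) (Ne.symm h0)
      obtain ⟨s, hts, hst⟩ := hdiv t ht0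
      -- reduced system
      set b : Fin n → Fin n → P := fun i j =>
        a i.castSucc j.castSucc + a i.castSucc L * s * a L j.castSucc with hb
      set φ : Fin n → (Y →₀ P) := fun i =>
        θ i.castSucc + (a i.castSucc L * s) • θ L with hφ
      have hsX : ∀ c : P, c * s * ((∑ j : Fin n, a L j.castSucc) + mass (θ L)) ≤ c := by
        intro c
        calc c * s * ((∑ j : Fin n, a L j.castSucc) + mass (θ L))
            ≤ c * s * t := hmulmono _ _ _ _ (le_refl _) hXt
          _ = c * (s * t) := mul_assoc _ _ _
          _ = c := by rw [hst, mul_one]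
      have hsub' : ∀ i, (∑ j, b i j) + mass (φ i) ≤ 1 := by
        intro i
        have hmφ : mass (φ i) = mass (θ i.castSucc) + a i.castSucc L * s * mass (θ L) := by
          rw [hφ]; simp only [mass_add, mass_smul]
        have hexp : (∑ j, b i j) + mass (φ i)
            = ((∑ j : Fin n, a i.castSucc j.castSucc) + mass (θ i.castSucc))
              + a i.castSucc L * s * ((∑ j : Fin n, a L j.castSucc) + mass (θ L)) := by
          have hS2 : (∑ j : Fin n, a i.castSucc L * s * a L j.castSucc)
              = a i.castSucc L * s * (∑ j : Fin n, a L j.castSucc) :=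
            (Finset.mul_sum _ _ _).symm
          rw [hmφ, hb]
          simp only [Finset.sum_add_distrib]
          rw [hS2, mul_add]
          abel
        rw [hexp]
        calc ((∑ j : Fin n, a i.castSucc j.castSucc) + mass (θ i.castSucc))
              + a i.castSucc L * s * ((∑ j : Fin n, a L j.castSucc) + mass (θ L))
            ≤ ((∑ j : Fin n, a i.castSucc j.castSucc) + mass (θ i.castSucc))
              + a i.castSucc L := haddmono _ _ _ (hsX _)
          _ = ((∑ j : Fin n, a i.castSucc j.castSucc) + a i.castSucc L)
              + mass (θ i.castSucc) := by abel
          _ = (∑ j, a i.castSucc j) + mass (θ i.castSucc) := by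
              rw [Fin.sum_univ_castSucc]
          _ ≤ 1 := hsub i.castSucc
      obtain ⟨z, hz_eq, hz_mass, hz_least⟩ := IH b φ hsub'
      set w : Y →₀ P := (∑ j : Fin n, a L j.castSucc • z j) + θ L with hw
      set x : Fin (n + 1) → (Y →₀ P) := Fin.snoc z (s • w) with hx
      have hxc : ∀ j : Fin n, x j.castSucc = z j := fun j => Fin.snoc_castSucc _ _ _
      have hxL : x L = s • w := Fin.snoc_last _ _
      have hscalar : a L L * s + 1 = s := by
        calc a L L * s + 1 = a L L * s + t * s := by rw [hts]
          _ = (a L L + t) * s := (add_mul _ _ _).symm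
          _ = s := by rw [ht, one_mul]
      have hmassw : mass w ≤ t := by
        rw [hw, mass_add, mass_finsum]
        refine le_trans ?_ hXt
        refine add_le_add' haddmono ?_ (le_refl _)
        refine sum_le_sum' haddmono fun j _ => ?_
        rw [mass_smul]
        calc a L j.castSucc * mass (z j) ≤ a L j.castSucc * 1 :=
              hmulmono _ _ _ _ (le_refl _) (hz_mass j)
          _ = a L j.castSucc := mul_one _
      refine ⟨x, ?_, ?_, ?_⟩
      · intro i
        refine Fin.lastCases ?_ ?_ i
        · rw [hxL, Fin.sum_univ_castSucc, hxL]
          have : (∑ j : Fin n, a L j.castSucc • x j.castSucc) = ∑ j : Fin n, a L j.castSucc • z j := by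
            refine Finset.sum_congr rfl fun j _ => by rw [hxc]
          rw [this]
          calc s • w = (a L L * s + 1) • w := by rw [hscalar]
            _ = (a L L * s) • w + 1 • w := add_smul _ _ _
            _ = a L L • (s • w) + ((∑ j : Fin n, a L j.castSucc • z j) + θ L) := by
                rw [smul_smul, one_smul, hw]
            _ = (∑ j : Fin n, a L j.castSucc • z j) + a L L • (s • w) + θ L := by
                abel
        · intro i
          rw [hxc, Fin.sum_univ_castSucc, hxL]
          have h1 : (∑ j : Fin n, a i.castSucc j.castSucc • x j.castSucc)
              = ∑ j : Fin n, a i.castSucc j.castSucc • z j :=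
            Finset.sum_congr rfl fun j _ => by rw [hxc]
          rw [h1, hz_eq i]
          rw [hb, hφ, hw]
          simp only [add_smul, Finset.sum_add_distrib, smul_add, Finset.smul_sum,
            smul_smul, mul_assoc]
          abel
      · intro i
        refine Fin.lastCases ?_ ?_ i
        · rw [hxL, mass_smul]
          calc s * mass w ≤ s * t := hmulmono _ _ _ _ (le_refl _) hmassw
            _ = 1 := hst
        · intro i; rw [hxc]; exact hz_mass i
      · intro x' hsup i
        -- pointwise bound for x' L
        set W : Y →₀ P := (∑ j : Fin n, a L j.castSucc • x' j.castSucc) + θ L with hW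
        have hWle : ∀ y, s * W y ≤ x' L y := by
          intro y
          have h1 := hsup L y
          rw [Fin.sum_univ_castSucc] at h1
          simp only [Finsupp.add_apply, Finsupp.finset_sum_apply, Finsupp.smul_apply,
            smul_eq_mul, ← hL] at h1
          have h2 : a L L * x' L y + W y ≤ a L L * x' L y + t * x' L y := by
            refine le_trans ?_ (le_trans h1 ?_)
            · apply le_of_eq
              rw [hW]
              simp only [Finsupp.add_apply, Finsupp.finset_sum_apply, Finsupp.smul_apply,
                smul_eq_mul]
              abel
            · apply le_of_eq
              calc x' L y = 1 * x' L y := (one_mul _).symm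
                _ = (a L L + t) * x' L y := by rw [ht]
                _ = a L L * x' L y + t * x' L y := add_mul _ _ _
          have h3 : W y ≤ t * x' L y := hcanc _ _ _ h2
          calc s * W y ≤ s * (t * x' L y) := hmulmono _ _ _ _ (le_refl _) h3
            _ = (s * t) * x' L y := (mul_assoc _ _ _).symm
            _ = x' L y := by rw [hst, one_mul]
        have hz' : ∀ i y, ((∑ j, b i j • (fun k => x' k.castSucc) j) + φ i) y
            ≤ x' i.castSucc y := by
          intro i y
          refine le_trans ?_ (hsup i.castSucc y)
          rw [Fin.sum_univ_castSucc]
          simp only [Finsupp.add_apply, Finsupp.finset_sum_apply, Finsupp.smul_apply,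
            smul_eq_mul, hb, hφ]
          have hWy : W y = (∑ j : Fin n, a L j.castSucc * x' j.castSucc y) + θ L y := by
            rw [hW]
            simp only [Finsupp.add_apply, Finsupp.finset_sum_apply, Finsupp.smul_apply,
              smul_eq_mul]
          have key1 : a i.castSucc L * (s * W y) ≤ a i.castSucc L * x' L y :=
            hmulmono _ _ _ _ (le_refl _) (hWle y)
          calc (∑ j : Fin n, (a i.castSucc j.castSucc + a i.castSucc L * s * a L j.castSucc)
                  * x' j.castSucc y) + (θ i.castSucc y + (a i.castSucc L * s) * θ L y)
              = ((∑ j : Fin n, a i.castSucc j.castSucc * x' j.castSucc y) + θ i.castSucc y)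
                + a i.castSucc L * (s * W y) := by
                  rw [hWy]
                  simp only [add_mul, Finset.sum_add_distrib, mul_add, Finset.mul_sum,
                    mul_assoc]
                  abel
            _ ≤ ((∑ j : Fin n, a i.castSucc j.castSucc * x' j.castSucc y) + θ i.castSucc y)
                + a i.castSucc L * x' L y := haddmono _ _ _ key1
            _ = (∑ j : Fin n, a i.castSucc j.castSucc * x' j.castSucc y)
                + a i.castSucc L * x' L y + θ i.castSucc y := by abel
        have hzle : ∀ i y, z i y ≤ x' i.castSucc y := hz_least _ hz'
        refine Fin.lastCases ?_ ?_ i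
        · intro y
          rw [hxL]
          have hwy : w y ≤ W y := by
            rw [hw, hW]
            simp only [Finsupp.add_apply, Finsupp.finset_sum_apply, Finsupp.smul_apply,
              smul_eq_mul]
            refine add_le_add' haddmono ?_ (le_refl _)
            exact sum_le_sum' haddmono fun j _ =>
              hmulmono _ _ _ _ (le_refl _) (hzle j y)
          calc (s • w) y = s * w y := rfl
            _ ≤ s * W y := hmulmono _ _ _ _ (le_refl _) hwy
            _ ≤ x' L y := hWle y
        · intro i y
          rw [hxc]
          exact hzle i y

end Key

/-- Every finite unguarded subprobabilistic system over a cancellative,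
difference-ordered, division positive ordered semiring `P` has a least
solution in subdistributions (ordered pointwise). -/
theorem stmt_13 {P Y : Type*} [Semiring P] [PartialOrder P] [PartialOrder Y]
    (hbot : ∀ r : P, 0 ≤ r)
    (haddmono : ∀ r s t : P, s ≤ t → r + s ≤ r + t)
    (hmulmono : ∀ r s t u : P, r ≤ s → t ≤ u → r * t ≤ s * u)
    (hcanc : ∀ r s t : P, r + s ≤ r + t → s ≤ t)
    (hdiff : ∀ r s : P, r ≤ s → ∃ t : P, r + t = s)
    (hdiv : ∀ r : P, 0 < r → ∃ s : P, r * s = 1 ∧ s * r = 1)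
    (n : ℕ) (a : Fin n → Fin n → P) (θ : Fin n → (Y →₀ P))
    (hsub : ∀ i, (∑ j, a i j) + mass (θ i) ≤ 1) :
    ∃ x : Fin n → (Y →₀ P),
      (∀ i, x i = (∑ j, a i j • x j) + θ i) ∧
      (∀ i, mass (x i) ≤ 1) ∧
      (∀ x' : Fin n → (Y →₀ P),
        (∀ i, x' i = (∑ j, a i j • x' j) + θ i) →
        (∀ i, mass (x' i) ≤ 1) →
        ∀ i y, x i y ≤ x' i y) := by
  obtain ⟨x, heq, hmass, hleast⟩ :=
    key hbot haddmono hmulmono hcanc hdiff hdiv n a θ hsub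
  exact ⟨x, heq, hmass, fun x' hx' _ =>
    hleast x' (fun i y => le_of_eq (by rw [← hx' i]))⟩
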